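/- Let 0 < γ < 1, b ∈ ℝ, and y₀ ∈ ℝ. The function y(t) = y₀ E_{γ,1}(b t^γ) = y₀ Σ_{k=0}^∞ (b t^γ)^k / Γ(γk + 1) satisfies the Volterra integral equation y(t) = y₀ + (b/Γ(γ)) ∫₀^t (t−τ)^{γ−1} y(τ) dτ for all t ≥ 0 (equivalently, it solves the Caputo fractional initial value problem ^cD^γ y = b y, y(0) = y₀). -/

import Mathlib

open Real MeasureTheory Filter intervalIntegral


lemma gamma_lb {s γ : ℝ} (hγ : 0 < γ) (hs : 1 < s) :
    Real.Gamma s * (s - 1) ^ γ ≤ Real.Gamma (s + γ) := by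
  have h1 : (0:ℝ) < s - 1 := by linarith
  have hs0 : (0:ℝ) < s := by linarith
  have hslope := Real.convexOn_log_Gamma.slope_mono_adjacent
    (x := s - 1) (y := s) (z := s + γ) (Set.mem_Ioi.2 h1) (Set.mem_Ioi.2 (by linarith))
    (by linarith) (by linarith)
  simp only [Function.comp] at hslope
  have hgadd : Real.Gamma s = (s - 1) * Real.Gamma (s - 1) := by
    have := Real.Gamma_add_one (by positivity : s - 1 ≠ 0)
    rw [sub_add_cancel] at this
    exact this
  have hΓpos : ∀ x : ℝ, 0 < x → 0 < Real.Gamma x := fun x hx => Real.Gamma_pos_of_pos hx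
  have hnum : Real.log (Real.Gamma s) - Real.log (Real.Gamma (s-1)) = Real.log (s - 1) := by
    rw [hgadd, Real.log_mul (by positivity) (ne_of_gt (hΓpos _ h1))]; ring
  rw [show s - (s-1) = 1 by ring, show s + γ - s = γ by ring, div_one, hnum] at hslope
  have key : γ * Real.log (s - 1) + Real.log (Real.Gamma s) ≤ Real.log (Real.Gamma (s + γ)) := by
    have := (le_div_iff₀ hγ).mp hslope
    linarith [mul_comm (Real.log (s-1)) γ]
  calc Real.Gamma s * (s-1)^γ = Real.exp (Real.log (Real.Gamma s) + γ * Real.log (s - 1)) := by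
        rw [Real.exp_add, Real.exp_log (hΓpos _ hs0), Real.rpow_def_of_pos h1, mul_comm (Real.log (s-1)) γ]
    _ ≤ Real.Gamma (s + γ) := by
        rw [← Real.exp_log (hΓpos _ (by linarith : (0:ℝ) < s + γ))]
        exact Real.exp_le_exp.2 (by linarith)

lemma ml_summable {γ : ℝ} (hγ : 0 < γ) (c x : ℝ) (hc : 1 ≤ c) :
    Summable fun k : ℕ => x ^ k / Real.Gamma (γ * k + c) := by
  apply summable_of_ratio_norm_eventually_le (r := 1/2) (by norm_num)
  have htend : Tendsto (fun k : ℕ => (γ * k) ^ γ) atTop atTop := by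
    apply (tendsto_rpow_atTop hγ).comp
    exact tendsto_natCast_atTop_atTop.const_mul_atTop hγ
  filter_upwards [htend.eventually_ge_atTop (2 * |x|), eventually_ge_atTop 1] with k hk hk1
  have hk0 : (0:ℝ) < γ * k := by
    have : (1:ℝ) ≤ (k:ℝ) := by exact_mod_cast hk1
    nlinarith
  have hs1 : 1 < γ * k + c := by linarith
  have hΓpos : 0 < Real.Gamma (γ * k + c) := Real.Gamma_pos_of_pos (by linarith)
  have hΓpos' : 0 < Real.Gamma (γ * (k+1) + c) := Real.Gamma_pos_of_pos (by positivity)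
  have hlb := gamma_lb hγ hs1
  have heq : γ * (k+1) + c = (γ * k + c) + γ := by ring
  have hmono : (γ * k) ^ γ ≤ (γ * k + c - 1) ^ γ :=
    Real.rpow_le_rpow (le_of_lt hk0) (by linarith) (le_of_lt hγ)
  have key : 2 * |x| * Real.Gamma (γ * k + c) ≤ Real.Gamma (γ * (k+1) + c) := by
    rw [heq]
    calc 2 * |x| * Real.Gamma (γ * k + c) ≤ (γ*k)^γ * Real.Gamma (γ * k + c) := by
          apply mul_le_mul_of_nonneg_right hk (le_of_lt hΓpos)
      _ ≤ (γ * k + c - 1)^γ * Real.Gamma (γ * k + c) := by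
          apply mul_le_mul_of_nonneg_right hmono (le_of_lt hΓpos)
      _ ≤ Real.Gamma ((γ * k + c) + γ) := by rw [mul_comm]; exact hlb
  have hcast : ((k+1:ℕ):ℝ) = (k:ℝ)+1 := by push_cast; ring
  rw [hcast, Real.norm_eq_abs, Real.norm_eq_abs, abs_div, abs_div, abs_of_pos hΓpos,
    abs_of_pos hΓpos', abs_pow, abs_pow, pow_succ]
  have hne : Real.Gamma (γ * k + c) ≠ 0 := ne_of_gt hΓpos
  have hne' : Real.Gamma (γ * (↑k+1) + c) ≠ 0 := ne_of_gt hΓpos'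
  have h2 : |x| ≤ Real.Gamma (γ * (↑k+1) + c) / (2 * Real.Gamma (γ * k + c)) := by
    rw [le_div_iff₀ (by positivity)]
    calc |x| * (2 * Real.Gamma (γ * k + c)) = 2 * |x| * Real.Gamma (γ * k + c) := by ring
      _ ≤ Real.Gamma (γ * (↑k+1) + c) := key
  calc |x|^k * |x| / Real.Gamma (γ * (↑k+1) + c)
      ≤ (|x|^k * (Real.Gamma (γ * (↑k+1) + c) / (2 * Real.Gamma (γ * k + c)))) /
        Real.Gamma (γ * (↑k+1) + c) := by
        gcongr
    _ = 1/2 * (|x|^k / Real.Gamma (γ * k + c)) := by field_simp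

lemma real_beta {u v : ℝ} (hu : 0 < u) (hv : 0 < v) :
    ∫ x in (0:ℝ)..1, x ^ (u - 1) * (1 - x) ^ (v - 1)
      = Real.Gamma u * Real.Gamma v / Real.Gamma (u + v) := by
  have hBc := Complex.Gamma_mul_Gamma_eq_betaIntegral
    (s := (u:ℂ)) (t := (v:ℂ)) (by simpa using hu) (by simpa using hv)
  have hGuv : (0:ℝ) < Real.Gamma (u + v) := Real.Gamma_pos_of_pos (by linarith)
  have hcongr : Complex.betaIntegral u v
      = ((∫ x in (0:ℝ)..1, x ^ (u - 1) * (1 - x) ^ (v - 1) : ℝ) : ℂ) := by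
    rw [Complex.betaIntegral, ← intervalIntegral.integral_ofReal]
    apply intervalIntegral.integral_congr
    intro x hx
    rw [Set.uIcc_of_le (by norm_num : (0:ℝ) ≤ 1)] at hx
    obtain ⟨hx0, hx1⟩ := hx
    simp only []
    rw [Complex.ofReal_mul, Complex.ofReal_cpow hx0, Complex.ofReal_cpow (by linarith : (0:ℝ) ≤ 1 - x)]
    push_cast
    ring
  rw [hcongr, ← Complex.ofReal_add, Complex.Gamma_ofReal, Complex.Gamma_ofReal,
    Complex.Gamma_ofReal] at hBc
  have : ((Real.Gamma u * Real.Gamma v : ℝ) : ℂ)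
      = ((Real.Gamma (u+v) * ∫ x in (0:ℝ)..1, x ^ (u - 1) * (1 - x) ^ (v - 1) : ℝ) : ℂ) := by
    push_cast; exact hBc
  have h2 := Complex.ofReal_injective this
  field_simp
  linarith [h2]

lemma beta_integrable {γ c t : ℝ} (hγ : 0 < γ) (hc : 0 ≤ c) (ht : 0 < t) :
    IntervalIntegrable (fun τ => (t - τ) ^ (γ - 1) * τ ^ c) volume 0 t := by
  have h1 : IntervalIntegrable (fun x : ℝ => x ^ (γ - 1)) volume 0 t :=
    intervalIntegral.intervalIntegrable_rpow' (by linarith)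
  have h2 := h1.comp_sub_left t
  simp only [sub_zero, sub_self] at h2
  apply h2.symm.mul_continuousOn
  exact ContinuousOn.rpow_const continuousOn_id (fun x _ => Or.inr hc)

lemma beta_scaled {γ c t : ℝ} (hγ : 0 < γ) (hc : 0 ≤ c) (ht : 0 < t) :
    ∫ τ in (0:ℝ)..t, (t - τ) ^ (γ - 1) * τ ^ c
      = Real.Gamma (c + 1) * Real.Gamma γ / Real.Gamma (c + 1 + γ) * t ^ (γ + c) := by
  have hsub := intervalIntegral.smul_integral_comp_mul_left
    (a := (0:ℝ)) (b := 1) (fun τ => (t - τ) ^ (γ - 1) * τ ^ c) t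
  simp only [mul_zero, mul_one, smul_eq_mul] at hsub
  rw [← hsub]
  have hcongr : ∫ x in (0:ℝ)..1, (t - t * x) ^ (γ - 1) * (t * x) ^ c
      = ∫ x in (0:ℝ)..1, t ^ (γ - 1 + c) * (x ^ ((c+1) - 1) * (1 - x) ^ (γ - 1)) := by
    apply intervalIntegral.integral_congr
    intro x hx
    rw [Set.uIcc_of_le (by norm_num : (0:ℝ) ≤ 1)] at hx
    obtain ⟨hx0, hx1⟩ := hx
    simp only []
    rw [show t - t * x = t * (1 - x) by ring,
      Real.mul_rpow (le_of_lt ht) (by linarith), Real.mul_rpow (le_of_lt ht) hx0,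
      Real.rpow_add ht, show (c+1)-1 = c by ring]
    ring
  rw [hcongr, intervalIntegral.integral_const_mul, real_beta (by linarith : (0:ℝ) < c+1) hγ,
    show γ + c = 1 + (γ - 1) + c by ring, Real.rpow_add ht (1 + (γ-1)) c,
    Real.rpow_add ht 1 (γ-1), Real.rpow_one, Real.rpow_add ht (γ-1) c]
  ring

/-- `y(t) = y₀ E_{γ,1}(b t^γ)` solves the Volterra integral equation
`y(t) = y₀ + (b/Γ(γ)) ∫₀^t (t-τ)^{γ-1} y(τ) dτ`, i.e. the Caputo problem
`ᶜD^γ y = b y`, `y(0) = y₀`. -/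
theorem mittagLeffler_solves_volterra (γ b y₀ : ℝ) (hγ₀ : 0 < γ) (hγ₁ : γ < 1) :
    ∀ t ≥ (0:ℝ),
      y₀ * ∑' k : ℕ, (b * t ^ γ) ^ k / Real.Gamma (γ * k + 1) =
        y₀ + (b / Real.Gamma γ) *
          ∫ τ in (0:ℝ)..t, (t - τ) ^ (γ - 1) *
            (y₀ * ∑' k : ℕ, (b * τ ^ γ) ^ k / Real.Gamma (γ * k + 1)) := by
  intro t ht0
  rcases eq_or_lt_of_le ht0 with h0 | ht
  · rw [← h0, intervalIntegral.integral_same, mul_zero, add_zero,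
      Real.zero_rpow (ne_of_gt hγ₀), mul_zero,
      tsum_eq_single 0 (by intro k hk; rw [zero_pow hk, zero_div])]
    norm_num [Real.Gamma_one]
  · have hΓγ : 0 < Real.Gamma γ := Real.Gamma_pos_of_pos hγ₀
    have htγ : 0 < t ^ γ := Real.rpow_pos_of_pos ht γ
    have hΓk : ∀ k : ℕ, 0 < Real.Gamma (γ * k + 1) :=
      fun k => Real.Gamma_pos_of_pos (by positivity)
    have hΓk' : ∀ k : ℕ, 0 < Real.Gamma (γ * k + 1 + γ) :=
      fun k => Real.Gamma_pos_of_pos (by positivity)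
    set F : ℕ → ℝ → ℝ := fun k τ =>
      (y₀ * b ^ k / Real.Gamma (γ * k + 1)) * ((t - τ) ^ (γ - 1) * τ ^ (γ * k)) with hF
    have hInt : ∀ k : ℕ, IntegrableOn (F k) (Set.Ioc 0 t) volume := by
      intro k
      have h := (beta_integrable hγ₀ (by positivity : (0:ℝ) ≤ γ * k) ht).const_mul
        (y₀ * b ^ k / Real.Gamma (γ * k + 1))
      rwa [intervalIntegrable_iff_integrableOn_Ioc_of_le ht.le] at h
    have hval : ∀ k : ℕ, ∫ τ in Set.Ioc 0 t, F k τ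
        = (y₀ * b ^ k / Real.Gamma (γ * k + 1)) *
          (Real.Gamma (γ * k + 1) * Real.Gamma γ / Real.Gamma (γ * k + 1 + γ)
            * t ^ (γ + γ * k)) := by
      intro k
      rw [hF]
      rw [MeasureTheory.integral_const_mul, ← intervalIntegral.integral_of_le ht.le,
        beta_scaled hγ₀ (by positivity) ht]
    have hvalnorm : ∀ k : ℕ, ∫ τ in Set.Ioc 0 t, ‖F k τ‖
        = (|y₀| * |b| ^ k / Real.Gamma (γ * k + 1)) *
          (Real.Gamma (γ * k + 1) * Real.Gamma γ / Real.Gamma (γ * k + 1 + γ)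
            * t ^ (γ + γ * k)) := by
      intro k
      rw [MeasureTheory.setIntegral_congr_fun measurableSet_Ioc
        (g := fun τ => (|y₀| * |b| ^ k / Real.Gamma (γ * k + 1)) *
          ((t - τ) ^ (γ - 1) * τ ^ (γ * k)))]
      · rw [MeasureTheory.integral_const_mul, ← intervalIntegral.integral_of_le ht.le,
          beta_scaled hγ₀ (by positivity) ht]
      · intro τ hτ
        obtain ⟨hτ0, hτt⟩ := hτ
        have h1 : 0 ≤ (t - τ) ^ (γ - 1) := Real.rpow_nonneg (by linarith) _
        have h2 : 0 ≤ τ ^ (γ * k) := Real.rpow_nonneg hτ0.le _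
        simp only [hF, Real.norm_eq_abs, abs_mul, abs_div, abs_of_pos (hΓk k), abs_pow,
          abs_of_nonneg h1, abs_of_nonneg h2]
    have hsum : Summable (fun k : ℕ => ∫ τ in Set.Ioc 0 t, ‖F k τ‖) := by
      have base := (ml_summable hγ₀ (1 + γ) (|b| * t ^ γ) (by linarith)).mul_left
        (|y₀| * Real.Gamma γ * t ^ γ)
      apply base.congr
      intro k
      rw [hvalnorm k, mul_pow, ← Real.rpow_natCast (t ^ γ) k, ← Real.rpow_mul ht.le,
        Real.rpow_add ht, show γ * (k:ℝ) + (1 + γ) = γ * k + 1 + γ by ring]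
      field_simp
    have hswap := MeasureTheory.integral_tsum_of_summable_integral_norm hInt hsum
    have hptwise : Set.EqOn
        (fun τ => (t - τ) ^ (γ - 1) *
          (y₀ * ∑' k : ℕ, (b * τ ^ γ) ^ k / Real.Gamma (γ * k + 1)))
        (fun τ => ∑' k : ℕ, F k τ) (Set.Ioc 0 t) := by
      intro τ hτ
      simp only []
      rw [← tsum_mul_left, ← tsum_mul_left]
      apply tsum_congr
      intro k
      rw [mul_pow, ← Real.rpow_natCast (τ ^ γ) k, ← Real.rpow_mul hτ.1.le, hF]
      ring
    have hint : ∫ τ in (0:ℝ)..t, (t - τ) ^ (γ - 1) *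
        (y₀ * ∑' k : ℕ, (b * τ ^ γ) ^ k / Real.Gamma (γ * k + 1))
        = ∑' k : ℕ, (y₀ * b ^ k / Real.Gamma (γ * k + 1)) *
          (Real.Gamma (γ * k + 1) * Real.Gamma γ / Real.Gamma (γ * k + 1 + γ)
            * t ^ (γ + γ * k)) := by
      rw [intervalIntegral.integral_of_le ht.le,
        MeasureTheory.setIntegral_congr_fun measurableSet_Ioc hptwise, ← hswap]
      exact tsum_congr hval
    rw [hint]
    have hS : Summable (fun k : ℕ => (b * t ^ γ) ^ k / Real.Gamma (γ * k + 1)) :=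
      ml_summable hγ₀ 1 (b * t ^ γ) le_rfl
    rw [Summable.tsum_eq_zero_add hS]
    simp only [pow_zero, Nat.cast_zero, mul_zero, zero_add, Real.Gamma_one]
    rw [mul_add, show y₀ * ((1:ℝ)/1) = y₀ by norm_num, ← tsum_mul_left, ← tsum_mul_left]
    congr 1
    apply tsum_congr
    intro k
    push_cast
    rw [show γ * ((k:ℝ) + 1) + 1 = γ * k + 1 + γ by ring,
      mul_pow, ← Real.rpow_natCast (t ^ γ) (k+1), ← Real.rpow_mul ht.le,
      show γ * (((k:ℕ) + 1 : ℕ):ℝ) = γ + γ * k by push_cast; ring]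
    rw [Real.rpow_add ht]
    field_simp
    ring
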